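/- Let D = (D_A, D_B, D_C) be a prescribed degree sequence for a partite 3-uniform hypergraph on vertex classes A (of size n₁), B (of size n₂), C. Then D is graphic if and only if there exists a graphic bipartite degree sequence D̄ = (D_{A×B}, D_C) on vertex classes A×B and C such that: for every i, Σ_{j=1}^{n₂} d((a_i,b_j)) = d(a_i) (the degree of a_i in D); for every j, Σ_{i=1}^{n₁} d((a_i,b_j)) = d(b_j) (the degree of b_j in D); and the C-part of D̄ equals D_C. -/

import Mathlib

open Finset

variable {A B C : Type*} [Fintype A] [Fintype B] [Fintype C]
  [DecidableEq A] [DecidableEq B] [DecidableEq C]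

/-- Degree of a vertex `a ∈ A` in a partite 3-uniform hypergraph with edge set `E`. -/
def hDegA (E : Finset (A × B × C)) (a : A) : ℕ := (E.filter fun e => e.1 = a).card

/-- Degree of a vertex `b ∈ B`. -/
def hDegB (E : Finset (A × B × C)) (b : B) : ℕ := (E.filter fun e => e.2.1 = b).card

/-- Degree of a vertex `c ∈ C`. -/
def hDegC (E : Finset (A × B × C)) (c : C) : ℕ := (E.filter fun e => e.2.2 = c).card

private def fwdEmb : (A × B × C) ↪ ((A × B) × C) :=
  ⟨fun e => ((e.1, e.2.1), e.2.2), fun x y h => by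
    simp only [Prod.mk.injEq] at h
    exact Prod.ext h.1.1 (Prod.ext h.1.2 h.2)⟩

private def bwdEmb : ((A × B) × C) ↪ (A × B × C) :=
  ⟨fun e => (e.1.1, e.1.2, e.2), fun x y h => by
    simp only [Prod.mk.injEq] at h
    exact Prod.ext (Prod.ext h.1 h.2.1) h.2.2⟩

/-- `D = (D_A, D_B, D_C)` is graphic as a partite 3-uniform hypergraph
degree sequence iff there is a graphic bipartite degree sequence `(D_{A×B}, D_C)` on
vertex classes `A×B` and `C` whose `A×B`-part has row sums `D_A`, column sums `D_B`,
and whose `C`-part equals `D_C`. -/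
theorem shadow_characterization (dA : A → ℕ) (dB : B → ℕ) (dC : C → ℕ) :
    (∃ E : Finset (A × B × C),
        (∀ a, hDegA E a = dA a) ∧ (∀ b, hDegB E b = dB b) ∧ (∀ c, hDegC E c = dC c))
    ↔
    (∃ dAB : A × B → ℕ,
        (∃ F : Finset ((A × B) × C),
            (∀ p : A × B, (F.filter fun e => e.1 = p).card = dAB p) ∧
            (∀ c : C, (F.filter fun e => e.2 = c).card = dC c)) ∧
        (∀ a : A, ∑ b : B, dAB (a, b) = dA a) ∧
        (∀ b : B, ∑ a : A, dAB (a, b) = dB b)) := by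
  constructor
  · rintro ⟨E, hA, hB, hC⟩
    refine ⟨fun p => (E.filter fun e => (e.1, e.2.1) = p).card,
      ⟨E.map fwdEmb, ?_, ?_⟩, ?_, ?_⟩
    · intro p
      rw [Finset.filter_map, Finset.card_map]
      rfl
    · intro c
      rw [Finset.filter_map, Finset.card_map, ← hC c]
      rfl
    · intro a
      rw [← hA a]
      unfold hDegA
      rw [Finset.card_eq_sum_card_fiberwise (f := fun e => e.2.1) (t := univ)
        (fun x _ => mem_univ _)]
      refine Finset.sum_congr rfl fun b _ => congrArg Finset.card ?_
      ext e
      simp only [mem_filter, Prod.mk.injEq]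
      tauto
    · intro b
      rw [← hB b]
      unfold hDegB
      rw [Finset.card_eq_sum_card_fiberwise (f := fun e => e.1) (t := univ)
        (fun x _ => mem_univ _)]
      refine Finset.sum_congr rfl fun a _ => congrArg Finset.card ?_
      ext e
      simp only [mem_filter, Prod.mk.injEq]
      tauto
  · rintro ⟨dAB, ⟨F, hF1, hF2⟩, hA, hB⟩
    refine ⟨F.map bwdEmb, ?_, ?_, ?_⟩
    · intro a
      unfold hDegA
      rw [Finset.filter_map, Finset.card_map, ← hA a,
        Finset.card_eq_sum_card_fiberwise (f := fun e => e.1.2) (t := univ)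
        (fun x _ => mem_univ _)]
      refine Finset.sum_congr rfl fun b _ => ?_
      rw [← hF1 (a, b)]
      refine congrArg Finset.card ?_
      ext e
      simp only [mem_filter, Function.comp, bwdEmb, Function.Embedding.coeFn_mk,
        Prod.ext_iff]
      constructor
      · rintro ⟨h1, h2⟩
        obtain ⟨h3, h4⟩ := Finset.mem_filter.mp h1
        exact ⟨h3, h4, h2⟩
      · rintro ⟨h1, h2, h3⟩
        exact ⟨Finset.mem_filter.mpr ⟨h1, h2⟩, h3⟩
    · intro b
      unfold hDegB
      rw [Finset.filter_map, Finset.card_map, ← hB b,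
        Finset.card_eq_sum_card_fiberwise (f := fun e => e.1.1) (t := univ)
        (fun x _ => mem_univ _)]
      refine Finset.sum_congr rfl fun a _ => ?_
      rw [← hF1 (a, b)]
      refine congrArg Finset.card ?_
      ext e
      simp only [mem_filter, Function.comp, bwdEmb, Function.Embedding.coeFn_mk,
        Prod.ext_iff]
      constructor
      · rintro ⟨h1, h2⟩
        obtain ⟨h3, h4⟩ := Finset.mem_filter.mp h1
        exact ⟨h3, h2, h4⟩
      · rintro ⟨h1, h2, h3⟩
        exact ⟨Finset.mem_filter.mpr ⟨h1, h3⟩, h2⟩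
    · intro c
      unfold hDegC
      rw [Finset.filter_map, Finset.card_map, ← hF2 c]
      rfl
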